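/- Let d ≥ 1, N ≥ 1, and let w_1, …, w_N : ℝ^d → ℂ be measurable functions such that for every m ∈ ℕ, sup_{x∈ℝ^d} (1+|x|)^m |w_j(x)| < ∞, and such that the family of translates {w_j(· − γ)}_{γ∈ℤ^d, 1≤j≤N} is orthonormal in L²(ℝ^d). Let A : ℝ^d → ℝ^d be a C¹ vector field and ε ≥ 0 a number such that sup_{w∈ℝ^d} |∂_j A_k(w) − ∂_k A_j(w)| ≤ ε for all j, k ∈ {1,…,d}. Define Λ(x,y) := exp(−i ∫_0^1 ⟨A(y + s(x−y)), x−y⟩ ds) and the magnetic translates W̃_{γ,j}(x) := Λ(x,γ) w_j(x−γ) for γ ∈ ℤ^d. Then for every m ∈ ℕ there exists a constant C_m < ∞, depending only on m, d, N and the decay constants sup_x (1+|x|)^r |w_j(x)| of the functions w_j, such that for all α, β ∈ ℤ^d and all j, k ∈ {1,…,N}: (1+|α−β|)^m · |⟨W̃_{α,j}, W̃_{β,k}⟩_{L²(ℝ^d)} − δ_{αβ} δ_{jk}| ≤ C_m ε. -/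

import Mathlib

open MeasureTheory Complex
open scoped RealInnerProductSpace
set_option maxHeartbeats 1000000

/-- A lattice point of `ℤ^d`, viewed as a vector in `ℝ^d`. -/
noncomputable def latticeEmbed {d : ℕ} (γ : Fin d → ℤ) : EuclideanSpace ℝ (Fin d) :=
  WithLp.toLp 2 (fun i => (γ i : ℝ))

/-- The magnetic phase `Λ(x,y) = exp(-i ∫_{[y,x]} A)` given by the line integral of the
vector potential `A` along the oriented segment from `y` to `x`. -/
noncomputable def magneticPhase {d : ℕ}
    (A : EuclideanSpace ℝ (Fin d) → EuclideanSpace ℝ (Fin d))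
    (x y : EuclideanSpace ℝ (Fin d)) : ℂ :=
  Complex.exp (-Complex.I *
    (∫ s in (0:ℝ)..1, (inner ℝ (A (y + s • (x - y))) (x - y) : ℝ) : ℝ))

-- Lemma L: |e^{ia} - e^{ib}| ≤ |a-b|
lemma expI_sub_le (a b : ℝ) :
    ‖Complex.exp (Complex.I * a) - Complex.exp (Complex.I * b)‖ ≤ |a - b| := by
  have hder : ∀ t : ℝ, HasDerivAt (fun t : ℝ => Complex.exp (Complex.I * t))
      (Complex.I * Complex.exp (Complex.I * t)) t := by
    intro t
    have h1 : HasDerivAt (fun t : ℝ => (Complex.I * t : ℂ)) Complex.I t := by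
      simpa using (Complex.ofRealCLM.hasDerivAt (x := t)).const_mul Complex.I
    simpa [mul_comm] using h1.cexp
  have hint : IntervalIntegrable (fun t : ℝ => Complex.I * Complex.exp (Complex.I * t))
      MeasureTheory.volume b a := by
    apply Continuous.intervalIntegrable
    continuity
  have := intervalIntegral.integral_eq_sub_of_hasDerivAt (f := fun t : ℝ =>
      Complex.exp (Complex.I * t)) (a := b) (b := a)
      (fun t _ => hder t) hint
  rw [← this]
  have hb : ∀ t ∈ Set.uIcc b a, ‖Complex.I * Complex.exp (Complex.I * t)‖ ≤ 1 := by
    intro t _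
    simp [Complex.norm_exp]
  calc ‖∫ t in b..a, Complex.I * Complex.exp (Complex.I * t)‖ ≤ 1 * |a - b| :=
        intervalIntegral.norm_integral_le_of_norm_le_const (by
          intro t ht
          exact hb t (Set.uIoc_subset_uIcc ht))
    _ = |a - b| := one_mul _

lemma coord_abs_le_norm {d : ℕ} (v : EuclideanSpace ℝ (Fin d)) (i : Fin d) :
    |v i| ≤ ‖v‖ := by
  have h := abs_real_inner_le_norm (EuclideanSpace.single i (1:ℝ)) v
  simpa [EuclideanSpace.inner_single_left, EuclideanSpace.norm_single] using h

lemma sum_single_eq_self {d : ℕ} (v : EuclideanSpace ℝ (Fin d)) :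
    ∑ i : Fin d, v i • EuclideanSpace.single i (1:ℝ) = v := by
  have h := (EuclideanSpace.basisFun (Fin d) ℝ).sum_repr v
  simpa [EuclideanSpace.basisFun_repr, EuclideanSpace.basisFun_apply] using h

lemma fderiv_coord {d : ℕ} {A : EuclideanSpace ℝ (Fin d) → EuclideanSpace ℝ (Fin d)}
    (hA : ContDiff ℝ 1 A) (p z : EuclideanSpace ℝ (Fin d)) (k : Fin d) :
    fderiv ℝ A p z k = fderiv ℝ (fun y => A y k) p z := by
  have hAd : DifferentiableAt ℝ A p := (hA.differentiable one_ne_zero) p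
  have h1 : fderiv ℝ ((EuclideanSpace.proj (𝕜 := ℝ) k) ∘ A) p
      = (EuclideanSpace.proj (𝕜 := ℝ) k).comp (fderiv ℝ A p) := by
    rw [fderiv_comp p (EuclideanSpace.proj (𝕜 := ℝ) k).differentiableAt hAd,
      ContinuousLinearMap.fderiv]
  have h2 : ((EuclideanSpace.proj (𝕜 := ℝ) k) ∘ A) = fun y => A y k := rfl
  rw [← h2, h1]; rfl

lemma curl_bound {d : ℕ} {A : EuclideanSpace ℝ (Fin d) → EuclideanSpace ℝ (Fin d)}
    (hA : ContDiff ℝ 1 A) {ε : ℝ}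
    (hcurl : ∀ (j k : Fin d) (v : EuclideanSpace ℝ (Fin d)),
      |fderiv ℝ (fun y => A y k) v (EuclideanSpace.single j 1) -
        fderiv ℝ (fun y => A y j) v (EuclideanSpace.single k 1)| ≤ ε)
    (p v u : EuclideanSpace ℝ (Fin d)) :
    _root_.abs ((⟪fderiv ℝ A p v, u⟫ : ℝ) - ⟪fderiv ℝ A p u, v⟫) ≤ ε * (d^2 * (‖v‖ * ‖u‖)) := by
  set L := fderiv ℝ A p with hL
  have expand : ∀ a b : EuclideanSpace ℝ (Fin d),
      (⟪L a, b⟫ : ℝ) = ∑ i : Fin d, ∑ k : Fin d,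
        a i * b k * (L (EuclideanSpace.single i (1:ℝ)) k) := by
    intro a b
    conv_lhs => rw [← sum_single_eq_self a]
    rw [map_sum, sum_inner]
    refine Finset.sum_congr rfl fun i _ => ?_
    rw [L.map_smul, real_inner_smul_left]
    conv_lhs => rw [← sum_single_eq_self b]
    rw [inner_sum, Finset.mul_sum]
    refine Finset.sum_congr rfl fun k _ => ?_
    rw [real_inner_smul_right, EuclideanSpace.inner_single_right]
    simp
    ring
  have e1 : (⟪L u, v⟫ : ℝ) = ∑ i : Fin d, ∑ k : Fin d,
      v i * u k * (L (EuclideanSpace.single k (1:ℝ)) i) := by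
    rw [expand u v, Finset.sum_comm]
    exact Finset.sum_congr rfl fun i _ => Finset.sum_congr rfl fun k _ => by ring
  have habs : ∀ i k : Fin d, |L (EuclideanSpace.single i (1:ℝ)) k
      - L (EuclideanSpace.single k (1:ℝ)) i| ≤ ε := by
    intro i k
    have h1 := fderiv_coord hA p (EuclideanSpace.single i (1:ℝ)) k
    have h2 := fderiv_coord hA p (EuclideanSpace.single k (1:ℝ)) i
    rw [hL, h1, h2]
    exact hcurl i k p
  calc _root_.abs ((⟪L v, u⟫ : ℝ) - ⟪L u, v⟫)
      = |∑ i : Fin d, ∑ k : Fin d, v i * u k *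
          (L (EuclideanSpace.single i (1:ℝ)) k - L (EuclideanSpace.single k (1:ℝ)) i)| := by
        rw [expand v u, e1, ← Finset.sum_sub_distrib]
        congr 1
        refine Finset.sum_congr rfl fun i _ => ?_
        rw [← Finset.sum_sub_distrib]
        exact Finset.sum_congr rfl fun k _ => by ring
    _ ≤ ∑ i : Fin d, ∑ k : Fin d, ‖v‖ * ‖u‖ * ε := by
        refine (Finset.abs_sum_le_sum_abs _ _).trans (Finset.sum_le_sum fun i _ => ?_)
        refine (Finset.abs_sum_le_sum_abs _ _).trans (Finset.sum_le_sum fun k _ => ?_)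
        rw [abs_mul, abs_mul]
        have h1 : |v i| ≤ ‖v‖ := coord_abs_le_norm v i
        have h2 : |u k| ≤ ‖u‖ := coord_abs_le_norm u k
        gcongr
        exact habs i k
    _ = ε * ((d:ℝ)^2 * (‖v‖ * ‖u‖)) := by
        simp [Finset.sum_const, Finset.card_univ]
        ring

noncomputable def linePhase {d : ℕ} (A : EuclideanSpace ℝ (Fin d) → EuclideanSpace ℝ (Fin d))
    (x y : EuclideanSpace ℝ (Fin d)) : ℝ :=
  ∫ s in (0:ℝ)..1, (inner ℝ (A (y + s • (x - y))) (x - y) : ℝ)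

lemma linePhase_self {d : ℕ} (A : EuclideanSpace ℝ (Fin d) → EuclideanSpace ℝ (Fin d))
    (y : EuclideanSpace ℝ (Fin d)) : linePhase A y y = 0 := by
  simp [linePhase]

section Flux
variable {d : ℕ} {A : EuclideanSpace ℝ (Fin d) → EuclideanSpace ℝ (Fin d)}

lemma curl_bound' (hA : ContDiff ℝ 1 A) {ε : ℝ}
    (hcurl : ∀ (p v u : EuclideanSpace ℝ (Fin d)),
      _root_.abs ((⟪fderiv ℝ A p v, u⟫ : ℝ) - ⟪fderiv ℝ A p u, v⟫) ≤ ε * (d^2 * (‖v‖ * ‖u‖)))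
    (hε : 0 ≤ ε)
    (a b x : EuclideanSpace ℝ (Fin d)) :
    |linePhase A x a - linePhase A x b + linePhase A a b| ≤
      ε * d^2 * (‖x - a‖ * (2 * ‖x - a‖ + ‖a - b‖)) := by
  set v : EuclideanSpace ℝ (Fin d) := x - a with hv
  have hxa : a + v = x := by rw [hv]; abel
  have hAc : Continuous A := hA.continuous
  have hAd : Differentiable ℝ A := hA.differentiable one_ne_zero
  have hA' : Continuous (fun q => fderiv ℝ A q) := hA.continuous_fderiv one_ne_zero
  -- the t-derivative of the integrand, as a function of (s, t)
  set g : EuclideanSpace ℝ (Fin d) → ℝ → ℝ → ℝ := fun y s t =>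
    (inner ℝ (A (y + s • (a + t • v - y))) v : ℝ) +
      (inner ℝ (fderiv ℝ A (y + s • (a + t • v - y)) (s • v)) (a + t • v - y) : ℝ) with hgdef
  -- joint continuity
  have hgcont : ∀ y, Continuous (fun q : ℝ × ℝ => g y q.1 q.2) := by
    intro y
    have hc1 : Continuous (fun q : ℝ × ℝ => a + q.2 • v - y) :=
      (continuous_const.add (continuous_snd.smul continuous_const)).sub continuous_const
    have hc2 : Continuous (fun q : ℝ × ℝ => y + q.1 • (a + q.2 • v - y)) :=
      continuous_const.add (continuous_fst.smul hc1)
    have hc3 : Continuous (fun q : ℝ × ℝ => A (y + q.1 • (a + q.2 • v - y))) := hAc.comp hc2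
    have hc4 : Continuous (fun q : ℝ × ℝ =>
        fderiv ℝ A (y + q.1 • (a + q.2 • v - y)) (q.1 • v)) :=
      (hA'.comp hc2).clm_apply (continuous_fst.smul continuous_const)
    exact (hc3.inner continuous_const).add (hc4.inner hc1)
  -- derivative in t
  have hderiv_t : ∀ (y : EuclideanSpace ℝ (Fin d)) (s t : ℝ),
      HasDerivAt (fun t : ℝ => (inner ℝ (A (y + s • (a + t • v - y))) (a + t • v - y) : ℝ))
        (g y s t) t := by
    intro y s t
    have hc : HasDerivAt (fun t : ℝ => a + t • v - y) v t := by
      simpa using (((hasDerivAt_id t).smul_const v).const_add a).sub_const y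
    have hu : HasDerivAt (fun t : ℝ => y + s • (a + t • v - y)) (s • v) t :=
      (hc.const_smul s).const_add y
    have hAu : HasDerivAt (fun t : ℝ => A (y + s • (a + t • v - y)))
        (fderiv ℝ A (y + s • (a + t • v - y)) (s • v)) t :=
      (hAd (y + s • (a + t • v - y))).hasFDerivAt.comp_hasDerivAt t hu
    simpa [hgdef] using HasDerivAt.inner ℝ hAu hc
  -- integrability of g in each variable / jointly
  have hgint_t : ∀ y s, IntervalIntegrable (fun t => g y s t) volume 0 1 := by
    intro y s
    exact ((hgcont y).comp (continuous_const.prodMk continuous_id)).intervalIntegrable 0 1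
  -- FTC in t
  have key_t : ∀ (y : EuclideanSpace ℝ (Fin d)) (s : ℝ),
      (inner ℝ (A (y + s • (x - y))) (x - y) : ℝ) - (inner ℝ (A (y + s • (a - y))) (a - y) : ℝ)
        = ∫ t in (0:ℝ)..1, g y s t := by
    intro y s
    have e1 : a + (1:ℝ) • v - y = x - y := by rw [one_smul, hxa]
    have e0 : a + (0:ℝ) • v - y = a - y := by rw [zero_smul, add_zero]
    have := intervalIntegral.integral_eq_sub_of_hasDerivAt
      (f := fun t : ℝ => (inner ℝ (A (y + s • (a + t • v - y))) (a + t • v - y) : ℝ))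
      (a := 0) (b := 1) (fun t _ => hderiv_t y s t) (hgint_t y s)
    rw [this]
    simp only [e1, e0]
  -- difference of line phases as a double integral
  have hfs_cont : ∀ (y z : EuclideanSpace ℝ (Fin d)),
      Continuous (fun s : ℝ => (inner ℝ (A (y + s • (z - y))) (z - y) : ℝ)) := by
    intro y z
    exact ((hAc.comp (continuous_const.add
      ((continuous_id.smul continuous_const)))).inner continuous_const)
  have hdiff : ∀ y : EuclideanSpace ℝ (Fin d), linePhase A x y - linePhase A a y
      = ∫ s in (0:ℝ)..1, (∫ t in (0:ℝ)..1, g y s t) := by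
    intro y
    rw [linePhase, linePhase,
      ← intervalIntegral.integral_sub ((hfs_cont y x).intervalIntegrable 0 1)
        ((hfs_cont y a).intervalIntegrable 0 1)]
    exact intervalIntegral.integral_congr fun s _ => key_t y s
  -- product integrability
  have hGint : ∀ y : EuclideanSpace ℝ (Fin d),
      Integrable (Function.uncurry (fun s t => g y s t))
        ((volume.restrict (Set.Ioc (0:ℝ) 1)).prod (volume.restrict (Set.Ioc (0:ℝ) 1))) := by
    intro y
    rw [Measure.prod_restrict]
    have hcpt : IsCompact (Set.Icc (0:ℝ) 1 ×ˢ Set.Icc (0:ℝ) 1) :=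
      isCompact_Icc.prod isCompact_Icc
    have h1 : IntegrableOn (Function.uncurry (fun s t => g y s t))
        (Set.Icc (0:ℝ) 1 ×ˢ Set.Icc (0:ℝ) 1) (volume.prod volume) :=
      (Continuous.continuousOn (hgcont y)).integrableOn_compact hcpt
    exact h1.mono_set (Set.prod_mono Set.Ioc_subset_Icc_self Set.Ioc_subset_Icc_self)
  have hswap : ∀ y : EuclideanSpace ℝ (Fin d),
      (∫ s in Set.Ioc (0:ℝ) 1, ∫ t in Set.Ioc (0:ℝ) 1, g y s t)
        = ∫ t in Set.Ioc (0:ℝ) 1, ∫ s in Set.Ioc (0:ℝ) 1, g y s t := fun y =>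
    MeasureTheory.integral_integral_swap (hGint y)
  have hH_int : ∀ y : EuclideanSpace ℝ (Fin d),
      Integrable (fun t => ∫ s in Set.Ioc (0:ℝ) 1, g y s t)
        (volume.restrict (Set.Ioc (0:ℝ) 1)) := fun y => (hGint y).integral_prod_right
  -- FTC in s
  have key_s : ∀ (y u : EuclideanSpace ℝ (Fin d)),
      ∫ s in (0:ℝ)..1, ((inner ℝ (A (y + s • u)) v : ℝ)
          + s * (inner ℝ (fderiv ℝ A (y + s • u) u) v : ℝ))
        = (inner ℝ (A (y + u)) v : ℝ) := by
    intro y u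
    have hdmul : ∀ s : ℝ, HasDerivAt (fun s : ℝ => s * (inner ℝ (A (y + s • u)) v : ℝ))
        ((inner ℝ (A (y + s • u)) v : ℝ) + s * (inner ℝ (fderiv ℝ A (y + s • u) u) v : ℝ)) s := by
      intro s
      have hu : HasDerivAt (fun s : ℝ => y + s • u) u s := by
        simpa using ((hasDerivAt_id s).smul_const u).const_add y
      have hAu : HasDerivAt (fun s : ℝ => A (y + s • u)) (fderiv ℝ A (y + s • u) u) s :=
        (hAd (y + s • u)).hasFDerivAt.comp_hasDerivAt s hu
      have hF : HasDerivAt (fun s : ℝ => (inner ℝ (A (y + s • u)) v : ℝ))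
          ((inner ℝ (fderiv ℝ A (y + s • u) u) v : ℝ)) s := by
        simpa using HasDerivAt.inner ℝ hAu (hasDerivAt_const s v)
      simpa [Pi.mul_def] using (hasDerivAt_id' s).mul hF
    have hconts : Continuous (fun s : ℝ => y + s • u) :=
      continuous_const.add (continuous_id.smul continuous_const)
    have hintc : Continuous (fun s : ℝ => (inner ℝ (A (y + s • u)) v : ℝ)
        + s * (inner ℝ (fderiv ℝ A (y + s • u) u) v : ℝ)) :=
      ((hAc.comp hconts).inner continuous_const).add
        (continuous_id.mul (((hA'.comp hconts).clm_apply continuous_const).inner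
          continuous_const))
    have h := intervalIntegral.integral_eq_sub_of_hasDerivAt (a := (0:ℝ)) (b := 1)
      (fun s _ => hdmul s) (hintc.intervalIntegrable 0 1)
    rw [h]
    simp
  -- decomposition of the inner integral
  have hIg : ∀ (y : EuclideanSpace ℝ (Fin d)) (t : ℝ),
      ∫ s in Set.Ioc (0:ℝ) 1, g y s t
        = (inner ℝ (A (a + t • v)) v : ℝ)
          + ∫ s in Set.Ioc (0:ℝ) 1,
              s * ((inner ℝ (fderiv ℝ A (y + s • (a + t • v - y)) v) (a + t • v - y) : ℝ)
                - (inner ℝ (fderiv ℝ A (y + s • (a + t • v - y)) (a + t • v - y)) v : ℝ)) := by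
    intro y t
    have hyu : y + (a + t • v - y) = a + t • v := by abel
    have hsplit : ∀ s : ℝ, g y s t
        = ((inner ℝ (A (y + s • (a + t • v - y))) v : ℝ)
            + s * (inner ℝ (fderiv ℝ A (y + s • (a + t • v - y)) (a + t • v - y)) v : ℝ))
          + s * ((inner ℝ (fderiv ℝ A (y + s • (a + t • v - y)) v) (a + t • v - y) : ℝ)
            - (inner ℝ (fderiv ℝ A (y + s • (a + t • v - y)) (a + t • v - y)) v : ℝ)) := by
      intro s
      have h1 : (inner ℝ (fderiv ℝ A (y + s • (a + t • v - y)) (s • v)) (a + t • v - y) : ℝ)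
          = s * (inner ℝ (fderiv ℝ A (y + s • (a + t • v - y)) v) (a + t • v - y) : ℝ) := by
        rw [ContinuousLinearMap.map_smul]
        exact real_inner_smul_left _ _ _
      show (inner ℝ (A (y + s • (a + t • v - y))) v : ℝ)
          + (inner ℝ (fderiv ℝ A (y + s • (a + t • v - y)) (s • v)) (a + t • v - y) : ℝ) = _
      rw [h1]; ring
    have hconts : Continuous (fun s : ℝ => y + s • (a + t • v - y)) :=
      continuous_const.add (continuous_id.smul continuous_const)
    have hi1 : IntegrableOn (fun s : ℝ => (inner ℝ (A (y + s • (a + t • v - y))) v : ℝ)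
        + s * (inner ℝ (fderiv ℝ A (y + s • (a + t • v - y)) (a + t • v - y)) v : ℝ))
        (Set.Ioc (0:ℝ) 1) volume :=
      (((hAc.comp hconts).inner continuous_const).add
        (continuous_id.mul (((hA'.comp hconts).clm_apply continuous_const).inner
          continuous_const))).integrableOn_Ioc
    have hi2 : IntegrableOn (fun s : ℝ =>
        s * ((inner ℝ (fderiv ℝ A (y + s • (a + t • v - y)) v) (a + t • v - y) : ℝ)
          - (inner ℝ (fderiv ℝ A (y + s • (a + t • v - y)) (a + t • v - y)) v : ℝ)))
        (Set.Ioc (0:ℝ) 1) volume :=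
      (continuous_id.mul ((((hA'.comp hconts).clm_apply continuous_const).inner
        continuous_const).sub (((hA'.comp hconts).clm_apply continuous_const).inner
          continuous_const))).integrableOn_Ioc
    calc ∫ s in Set.Ioc (0:ℝ) 1, g y s t
        = ∫ s in Set.Ioc (0:ℝ) 1, (((inner ℝ (A (y + s • (a + t • v - y))) v : ℝ)
            + s * (inner ℝ (fderiv ℝ A (y + s • (a + t • v - y)) (a + t • v - y)) v : ℝ))
          + s * ((inner ℝ (fderiv ℝ A (y + s • (a + t • v - y)) v) (a + t • v - y) : ℝ)
            - (inner ℝ (fderiv ℝ A (y + s • (a + t • v - y)) (a + t • v - y)) v : ℝ))) := by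
          simp only [hsplit]
      _ = (∫ s in Set.Ioc (0:ℝ) 1, ((inner ℝ (A (y + s • (a + t • v - y))) v : ℝ)
            + s * (inner ℝ (fderiv ℝ A (y + s • (a + t • v - y)) (a + t • v - y)) v : ℝ)))
          + ∫ s in Set.Ioc (0:ℝ) 1,
              s * ((inner ℝ (fderiv ℝ A (y + s • (a + t • v - y)) v) (a + t • v - y) : ℝ)
                - (inner ℝ (fderiv ℝ A (y + s • (a + t • v - y)) (a + t • v - y)) v : ℝ)) :=
          integral_add hi1 hi2
      _ = _ := by
          rw [← intervalIntegral.integral_of_le zero_le_one, key_s y (a + t • v - y), hyu]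
  -- bound on the remainder integral
  have hRbound : ∀ (y : EuclideanSpace ℝ (Fin d)) (t : ℝ),
      ‖∫ s in Set.Ioc (0:ℝ) 1,
          s * ((inner ℝ (fderiv ℝ A (y + s • (a + t • v - y)) v) (a + t • v - y) : ℝ)
            - (inner ℝ (fderiv ℝ A (y + s • (a + t • v - y)) (a + t • v - y)) v : ℝ))‖
        ≤ ε * ((d:ℝ)^2 * (‖v‖ * ‖a + t • v - y‖)) := by
    intro y t
    have hb : ∀ s ∈ Set.Ioc (0:ℝ) 1,
        ‖s * ((inner ℝ (fderiv ℝ A (y + s • (a + t • v - y)) v) (a + t • v - y) : ℝ)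
          - (inner ℝ (fderiv ℝ A (y + s • (a + t • v - y)) (a + t • v - y)) v : ℝ))‖
        ≤ ε * ((d:ℝ)^2 * (‖v‖ * ‖a + t • v - y‖)) := by
      intro s hs
      rw [Real.norm_eq_abs, abs_mul]
      have h1 : |s| ≤ 1 := abs_le.mpr ⟨by linarith [hs.1], hs.2⟩
      have h2 := hcurl (y + s • (a + t • v - y)) v (a + t • v - y)
      simpa using mul_le_mul h1 h2 (abs_nonneg _) zero_le_one
    have hfin : volume (Set.Ioc (0:ℝ) 1) < ⊤ := by
      rw [Real.volume_Ioc]; exact ENNReal.ofReal_lt_top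
    have h4 : (volume (Set.Ioc (0:ℝ) 1)).toReal = 1 := by
      rw [Real.volume_Ioc]; norm_num
    have h5 := norm_setIntegral_le_of_norm_le_const hfin hb
    rw [measureReal_def, h4, mul_one] at h5
    exact h5
  -- assemble
  have main : linePhase A x a - linePhase A x b + linePhase A a b
      = ∫ t in Set.Ioc (0:ℝ) 1, ((∫ s in Set.Ioc (0:ℝ) 1, g a s t)
          - ∫ s in Set.Ioc (0:ℝ) 1, g b s t) := by
    have e : linePhase A x a - linePhase A x b + linePhase A a b
        = (linePhase A x a - linePhase A a a) - (linePhase A x b - linePhase A a b) := by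
      rw [linePhase_self]; ring
    rw [e, hdiff a, hdiff b]
    simp only [intervalIntegral.integral_of_le zero_le_one]
    rw [hswap a, hswap b, ← integral_sub (hH_int a) (hH_int b)]
  rw [← Real.norm_eq_abs, main]
  have hptw : ∀ t ∈ Set.Ioc (0:ℝ) 1,
      ‖(∫ s in Set.Ioc (0:ℝ) 1, g a s t) - ∫ s in Set.Ioc (0:ℝ) 1, g b s t‖
        ≤ ε * (d:ℝ)^2 * (‖v‖ * (2*‖v‖ + ‖a - b‖)) := by
    intro t ht
    rw [hIg a t, hIg b t]
    have e2 : ∀ X R1 R2 : ℝ, (X + R1) - (X + R2) = R1 - R2 := by intros; ring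
    rw [e2]
    have h1 := hRbound a t
    have h2 := hRbound b t
    have htabs : |t| ≤ 1 := abs_le.mpr ⟨by linarith [ht.1], ht.2⟩
    have ha1 : ‖a + t • v - a‖ ≤ ‖v‖ := by
      have e3 : a + t • v - a = t • v := by abel
      rw [e3, norm_smul]
      calc ‖t‖ * ‖v‖ ≤ 1 * ‖v‖ :=
            mul_le_mul_of_nonneg_right htabs (norm_nonneg v)
        _ = ‖v‖ := one_mul _
    have hb1 : ‖a + t • v - b‖ ≤ ‖a - b‖ + ‖v‖ := by
      have e3 : a + t • v - b = (a - b) + t • v := by abel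
      rw [e3]
      refine (norm_add_le _ _).trans ?_
      have : ‖t • v‖ ≤ ‖v‖ := by
        rw [norm_smul]
        calc ‖t‖ * ‖v‖ ≤ 1 * ‖v‖ := mul_le_mul_of_nonneg_right htabs (norm_nonneg v)
          _ = ‖v‖ := one_mul _
      linarith
    calc ‖(∫ s in Set.Ioc (0:ℝ) 1,
            s * ((inner ℝ (fderiv ℝ A (a + s • (a + t • v - a)) v) (a + t • v - a) : ℝ)
              - (inner ℝ (fderiv ℝ A (a + s • (a + t • v - a)) (a + t • v - a)) v : ℝ)))
          - ∫ s in Set.Ioc (0:ℝ) 1,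
            s * ((inner ℝ (fderiv ℝ A (b + s • (a + t • v - b)) v) (a + t • v - b) : ℝ)
              - (inner ℝ (fderiv ℝ A (b + s • (a + t • v - b)) (a + t • v - b)) v : ℝ))‖
        ≤ ε * ((d:ℝ)^2 * (‖v‖ * ‖a + t • v - a‖))
            + ε * ((d:ℝ)^2 * (‖v‖ * ‖a + t • v - b‖)) :=
          (norm_sub_le _ _).trans (add_le_add h1 h2)
      _ ≤ ε * ((d:ℝ)^2 * (‖v‖ * ‖v‖)) + ε * ((d:ℝ)^2 * (‖v‖ * (‖a - b‖ + ‖v‖))) := by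
          gcongr
      _ = ε * (d:ℝ)^2 * (‖v‖ * (2*‖v‖ + ‖a - b‖)) := by ring
  have hfin : volume (Set.Ioc (0:ℝ) 1) < ⊤ := by
    rw [Real.volume_Ioc]; exact ENNReal.ofReal_lt_top
  have h4 : (volume (Set.Ioc (0:ℝ) 1)).toReal = 1 := by
    rw [Real.volume_Ioc]; norm_num
  have h5 := norm_setIntegral_le_of_norm_le_const hfin hptw
  rw [measureReal_def, h4, mul_one] at h5
  exact h5

end Flux


lemma phase_combine (p q : ℝ) (z1 z2 : ℂ) :
    (starRingEnd ℂ) (Complex.exp (-Complex.I * (p : ℂ)) * z1) *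
        (Complex.exp (-Complex.I * (q : ℂ)) * z2)
      = Complex.exp (Complex.I * ((p - q : ℝ) : ℂ)) * ((starRingEnd ℂ) z1 * z2) := by
  have h1 : (starRingEnd ℂ) (Complex.exp (-Complex.I * (p : ℂ)))
      = Complex.exp (Complex.I * (p : ℂ)) := by
    rw [← Complex.exp_conj]
    simp
  have h2 : Complex.exp (Complex.I * ((p - q : ℝ) : ℂ))
      = Complex.exp (Complex.I * (p : ℂ)) * Complex.exp (-Complex.I * (q : ℂ)) := by
    rw [← Complex.exp_add]
    congr 1
    push_cast
    ring
  rw [map_mul, h1, h2]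
  ring

lemma norm_expI (r : ℝ) : ‖Complex.exp (Complex.I * (r : ℂ))‖ = 1 := by
  simp [Complex.norm_exp]

lemma master_est (m : ℕ) {ε cd nz ny nρ w1 w2 DA DB IV : ℝ}
    (hε : 0 ≤ ε) (hcd : 0 ≤ cd) (hz : 0 ≤ nz) (hy : 0 ≤ ny) (hρ : 0 ≤ nρ)
    (hw1 : 0 ≤ w1) (hw2 : 0 ≤ w2) (hIV : 0 ≤ IV) (hDB : 0 ≤ DB)
    (htri : nρ ≤ nz + ny)
    (h1 : (1 + nz)^(m+2) * w1 ≤ DA * IV)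
    (h2 : (1 + ny)^(m+1) * w2 ≤ DB) :
    (1 + nρ)^m * (ε * cd * (nz * (2*nz + nρ)) * (w1 * w2))
      ≤ 3 * cd * (DA * DB) * IV * ε := by
  have p1 : (1 + nρ)^m ≤ ((1+nz)*(1+ny))^m :=
    pow_le_pow_left₀ (by positivity) (by nlinarith) m
  have p2 : nz * (2*nz + nρ) ≤ 3*((1+nz)^2*(1+ny)) := by
    nlinarith [mul_nonneg hz hy, mul_nonneg (mul_nonneg hz hz) hy,
      mul_le_mul_of_nonneg_left htri hz, sq_nonneg nz, mul_nonneg hz hz]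
  have q1 : ε * cd * (nz * (2*nz + nρ)) * (w1 * w2)
      ≤ ε * cd * (3*((1+nz)^2*(1+ny))) * (w1 * w2) := by
    have h3 : 0 ≤ ε * cd := mul_nonneg hε hcd
    have h4 : 0 ≤ w1 * w2 := mul_nonneg hw1 hw2
    exact mul_le_mul_of_nonneg_right (mul_le_mul_of_nonneg_left p2 h3) h4
  calc (1 + nρ)^m * (ε * cd * (nz * (2*nz + nρ)) * (w1 * w2))
      ≤ ((1+nz)*(1+ny))^m * (ε * cd * (3*((1+nz)^2*(1+ny))) * (w1 * w2)) :=
        mul_le_mul p1 q1 (by positivity) (by positivity)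
    _ = 3 * ε * cd * (((1+nz)^(m+2) * w1) * ((1+ny)^(m+1) * w2)) := by
        rw [mul_pow]; ring
    _ ≤ 3 * ε * cd * ((DA * IV) * DB) := by
        have h5 : ((1+nz)^(m+2) * w1) * ((1+ny)^(m+1) * w2) ≤ (DA * IV) * DB :=
          mul_le_mul h1 h2 (by positivity) (le_trans (by positivity) h1)
        exact mul_le_mul_of_nonneg_left h5 (by positivity)
    _ = 3 * cd * (DA * DB) * IV * ε := by ring

/-- The Gram matrix of the magnetic translates of a rapidly decaying orthonormal
Wannier system is the identity up to an `ε`-small, rapidly off-diagonal decaying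
perturbation, where `ε` bounds the magnetic field `B = dA`. -/
theorem magnetic_wannier_gram_estimate (d N : ℕ) (hd : 1 ≤ d) (hN : 1 ≤ N)
    (D : ℕ → ℝ) (m : ℕ) :
    ∃ C : ℝ, ∀ (w : Fin N → EuclideanSpace ℝ (Fin d) → ℂ),
      (∀ j, Measurable (w j)) →
      (∀ (r : ℕ) (j : Fin N) (x : EuclideanSpace ℝ (Fin d)),
        (1 + ‖x‖) ^ r * ‖w j x‖ ≤ D r) →
      (∀ (α β : Fin d → ℤ) (j k : Fin N),
        ∫ x : EuclideanSpace ℝ (Fin d),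
            (starRingEnd ℂ) (w j (x - latticeEmbed α)) * w k (x - latticeEmbed β) =
          if α = β ∧ j = k then 1 else 0) →
      ∀ (A : EuclideanSpace ℝ (Fin d) → EuclideanSpace ℝ (Fin d)),
        ContDiff ℝ 1 A →
      ∀ ε : ℝ, 0 ≤ ε →
        (∀ (j k : Fin d) (v : EuclideanSpace ℝ (Fin d)),
          |fderiv ℝ (fun y => A y k) v (EuclideanSpace.single j 1) -
            fderiv ℝ (fun y => A y j) v (EuclideanSpace.single k 1)| ≤ ε) →
      ∀ (α β : Fin d → ℤ) (j k : Fin N),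
        (1 + ‖latticeEmbed α - latticeEmbed β‖) ^ m *
          ‖(∫ x : EuclideanSpace ℝ (Fin d),
              (starRingEnd ℂ) (magneticPhase A x (latticeEmbed α) *
                  w j (x - latticeEmbed α)) *
                (magneticPhase A x (latticeEmbed β) * w k (x - latticeEmbed β))) -
            (if α = β ∧ j = k then 1 else 0)‖ ≤ C * ε := by
  classical
  refine ⟨3 * (d:ℝ)^2 * (D (m+d+3) * D (m+1)) *
    (∫ x : EuclideanSpace ℝ (Fin d), ((1 + ‖x‖)^(d+1) : ℝ)⁻¹), ?_⟩
  intro w hw hdecay hortho A hA ε hε hcurl α β j k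
  set K : ℝ := ∫ x : EuclideanSpace ℝ (Fin d), ((1 + ‖x‖)^(d+1) : ℝ)⁻¹ with hK
  -- integrability of the basic decay profile
  have hKint : Integrable (fun x : EuclideanSpace ℝ (Fin d) => ((1 + ‖x‖)^(d+1) : ℝ)⁻¹)
      volume := by
    have hr : (Module.finrank ℝ (EuclideanSpace ℝ (Fin d)) : ℝ) < ((d+1 : ℕ) : ℝ) := by
      rw [finrank_euclideanSpace_fin]
      push_cast
      linarith
    have h := integrable_one_add_norm (μ := (volume : Measure (EuclideanSpace ℝ (Fin d)))) hr
    refine h.congr (Filter.Eventually.of_forall fun x => ?_)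
    show (1 + ‖x‖) ^ (-((d+1:ℕ):ℝ)) = ((1 + ‖x‖)^(d+1) : ℝ)⁻¹
    rw [Real.rpow_neg (by positivity), Real.rpow_natCast]
  set a : EuclideanSpace ℝ (Fin d) := latticeEmbed α with ha
  set b : EuclideanSpace ℝ (Fin d) := latticeEmbed β with hb
  have hKa : Integrable (fun x : EuclideanSpace ℝ (Fin d) => ((1 + ‖x - a‖)^(d+1) : ℝ)⁻¹)
      volume := hKint.comp_sub_right a
  have hKaeq : (∫ x : EuclideanSpace ℝ (Fin d), ((1 + ‖x - a‖)^(d+1) : ℝ)⁻¹) = K :=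
    integral_sub_right_eq_self (fun y : EuclideanSpace ℝ (Fin d) => ((1 + ‖y‖)^(d+1) : ℝ)⁻¹) a
  have hD : ∀ r : ℕ, 0 ≤ D r := fun r => le_trans (by positivity) (hdecay r j 0)
  have hdec' : ∀ (p q : ℕ) (jj : Fin N) (z : EuclideanSpace ℝ (Fin d)),
      (1 + ‖z‖)^p * ‖w jj z‖ ≤ D (p + q) * ((1 + ‖z‖)^q)⁻¹ := by
    intro p q jj z
    have h2 : (1 + ‖z‖)^p * ‖w jj z‖ * (1 + ‖z‖)^q ≤ D (p + q) := by
      calc (1 + ‖z‖)^p * ‖w jj z‖ * (1 + ‖z‖)^q = (1 + ‖z‖)^(p+q) * ‖w jj z‖ := by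
            rw [pow_add]; ring
        _ ≤ D (p + q) := hdecay (p + q) jj z
    calc (1 + ‖z‖)^p * ‖w jj z‖
        = ((1 + ‖z‖)^p * ‖w jj z‖ * (1 + ‖z‖)^q) * ((1 + ‖z‖)^q)⁻¹ := by
          field_simp
      _ ≤ D (p + q) * ((1 + ‖z‖)^q)⁻¹ := by gcongr
  have hw0 : ∀ (jj : Fin N) (z : EuclideanSpace ℝ (Fin d)), ‖w jj z‖ ≤ D 0 := by
    intro jj z
    simpa using hdecay 0 jj z
  have hwdq : ∀ (jj : Fin N) (z : EuclideanSpace ℝ (Fin d)),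
      ‖w jj z‖ ≤ D (d+1) * ((1 + ‖z‖)^(d+1))⁻¹ := by
    intro jj z
    simpa using hdec' 0 (d+1) jj z
  -- continuity of the line phase
  have hAc : Continuous A := hA.continuous
  have hlpc : ∀ y : EuclideanSpace ℝ (Fin d), Continuous fun x => linePhase A x y := by
    intro y
    have h1 : Continuous (fun q : EuclideanSpace ℝ (Fin d) × ℝ => q.1 - y) :=
      continuous_fst.sub continuous_const
    have h2 : Continuous (fun q : EuclideanSpace ℝ (Fin d) × ℝ => y + q.2 • (q.1 - y)) :=
      continuous_const.add (continuous_snd.smul h1)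
    have hcont : Continuous (Function.uncurry fun (x : EuclideanSpace ℝ (Fin d)) (s : ℝ) =>
        (inner ℝ (A (y + s • (x - y))) (x - y) : ℝ)) := (hAc.comp h2).inner h1
    unfold linePhase
    exact intervalIntegral.continuous_parametric_intervalIntegral_of_continuous' hcont 0 1
  have hmp : ∀ x y : EuclideanSpace ℝ (Fin d),
      magneticPhase A x y = Complex.exp (-Complex.I * ((linePhase A x y : ℝ) : ℂ)) :=
    fun x y => rfl
  have hwmeas : ∀ (jj : Fin N) (y : EuclideanSpace ℝ (Fin d)),
      Measurable fun x : EuclideanSpace ℝ (Fin d) => w jj (x - y) :=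
    fun jj y => (hw jj).comp (measurable_id.sub measurable_const)
  -- the orthogonality relation
  have hIδ := hortho α β j k
  rw [← ha, ← hb] at hIδ
  set g2 : EuclideanSpace ℝ (Fin d) → ℂ :=
    fun x => (starRingEnd ℂ) (w j (x - a)) * w k (x - b) with hg2
  set δ : ℂ := if α = β ∧ j = k then 1 else 0 with hδ
  have hg2meas : Measurable g2 :=
    (continuous_star.measurable.comp (hwmeas j a)).mul (hwmeas k b)
  have hbound2 : ∀ x, ‖g2 x‖ ≤ D (d+1) * ((1 + ‖x - a‖)^(d+1))⁻¹ * D 0 := by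
    intro x
    simp only [hg2]
    rw [norm_mul, RCLike.norm_conj]
    exact mul_le_mul (hwdq j (x - a)) (hw0 k (x - b)) (norm_nonneg _)
      ((norm_nonneg _).trans (hwdq j (x - a)))
  have hdom : Integrable (fun x : EuclideanSpace ℝ (Fin d) =>
      D (d+1) * ((1 + ‖x - a‖)^(d+1))⁻¹ * D 0) volume :=
    (hKa.const_mul (D (d+1))).mul_const (D 0)
  have hf2 : Integrable g2 volume :=
    hdom.mono' hg2meas.aestronglyMeasurable (Filter.Eventually.of_forall hbound2)
  have hΨc : Continuous fun x => linePhase A x a - linePhase A x b := (hlpc a).sub (hlpc b)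
  have hexpc : Continuous fun x : EuclideanSpace ℝ (Fin d) =>
      Complex.exp (Complex.I * ((linePhase A x a - linePhase A x b : ℝ) : ℂ)) :=
    Complex.continuous_exp.comp (continuous_const.mul (Complex.continuous_ofReal.comp hΨc))
  set f1 : EuclideanSpace ℝ (Fin d) → ℂ := fun x =>
    Complex.exp (Complex.I * ((linePhase A x a - linePhase A x b : ℝ) : ℂ)) * g2 x with hf1def
  have hf1 : Integrable f1 volume := by
    refine hdom.mono' ((hexpc.measurable.mul hg2meas).aestronglyMeasurable)
      (Filter.Eventually.of_forall fun x => ?_)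
    simp only [hf1def]
    rw [norm_mul, norm_expI, one_mul]
    exact hbound2 x
  set c : ℝ := -linePhase A a b with hc
  set lam : ℂ := Complex.exp (Complex.I * (c : ℂ)) with hlam
  have hlamδ : lam * δ = δ := by
    rcases Classical.em (α = β ∧ j = k) with h | h
    · have hab : a = b := by rw [ha, hb, h.1]
      have hc0 : c = 0 := by rw [hc, hab, linePhase_self, neg_zero]
      rw [hδ, if_pos h, hlam, hc0]
      simp
    · rw [hδ, if_neg h, mul_zero]
  -- rewrite the Gram integral
  have hIeq : (∫ x : EuclideanSpace ℝ (Fin d),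
        (starRingEnd ℂ) (magneticPhase A x a * w j (x - a)) *
          (magneticPhase A x b * w k (x - b)))
      = ∫ x, f1 x := by
    refine integral_congr_ae (Filter.Eventually.of_forall fun x => ?_)
    simp only [hf1def, hg2]
    rw [hmp x a, hmp x b]
    exact phase_combine (linePhase A x a) (linePhase A x b) (w j (x - a)) (w k (x - b))
  have hkeyI : (∫ x : EuclideanSpace ℝ (Fin d),
        (starRingEnd ℂ) (magneticPhase A x a * w j (x - a)) *
          (magneticPhase A x b * w k (x - b))) - δ
      = ∫ x, (Complex.exp (Complex.I * ((linePhase A x a - linePhase A x b : ℝ) : ℂ)) - lam)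
          * g2 x := by
    rw [hIeq, ← hlamδ, ← hIδ, ← integral_const_mul, ← integral_sub hf1 (hf2.const_mul lam)]
    refine integral_congr_ae (Filter.Eventually.of_forall fun x => ?_)
    simp only [hf1def]
    ring
  rw [hkeyI]
  -- pointwise master estimate
  have hmaster : ∀ x : EuclideanSpace ℝ (Fin d),
      (1 + ‖a - b‖)^m *
        ‖(Complex.exp (Complex.I * ((linePhase A x a - linePhase A x b : ℝ) : ℂ)) - lam)
          * g2 x‖
      ≤ 3 * (d:ℝ)^2 * (D (m+d+3) * D (m+1)) * ((1 + ‖x - a‖)^(d+1))⁻¹ * ε := by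
    intro x
    have hcomb : ‖Complex.exp (Complex.I * ((linePhase A x a - linePhase A x b : ℝ) : ℂ))
        - lam‖ ≤ ε * (d:ℝ)^2 * (‖x - a‖ * (2*‖x - a‖ + ‖a - b‖)) := by
      have hstep : ‖Complex.exp (Complex.I * ((linePhase A x a - linePhase A x b : ℝ) : ℂ))
          - lam‖ ≤ |(linePhase A x a - linePhase A x b) - c| := by
        rw [hlam]
        exact expI_sub_le (linePhase A x a - linePhase A x b) c
      refine hstep.trans ?_
      have h6 : linePhase A x a - linePhase A x b - c
          = linePhase A x a - linePhase A x b + linePhase A a b := by rw [hc]; ring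
      rw [h6]
      exact curl_bound' hA (fun p v u => curl_bound hA hcurl p v u) hε a b x
    simp only [hg2]
    rw [norm_mul, norm_mul, RCLike.norm_conj]
    have h1 : (1 + ‖x - a‖)^(m+2) * ‖w j (x - a)‖
        ≤ D (m+d+3) * ((1 + ‖x - a‖)^(d+1))⁻¹ := by
      have h := hdec' (m+2) (d+1) j (x - a)
      have e : m+2+(d+1) = m+d+3 := by omega
      rwa [e] at h
    have h2 : (1 + ‖x - b‖)^(m+1) * ‖w k (x - b)‖ ≤ D (m+1) := hdecay (m+1) k (x - b)
    have htri : ‖a - b‖ ≤ ‖x - a‖ + ‖x - b‖ := by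
      have e : a - b = (x - b) - (x - a) := by abel
      rw [e]
      exact (norm_sub_le _ _).trans (le_of_eq (add_comm _ _))
    have hstep2 : (1 + ‖a - b‖)^m *
        (‖Complex.exp (Complex.I * ((linePhase A x a - linePhase A x b : ℝ) : ℂ)) - lam‖
          * (‖w j (x - a)‖ * ‖w k (x - b)‖))
        ≤ (1 + ‖a - b‖)^m * ((ε * (d:ℝ)^2 * (‖x - a‖ * (2*‖x - a‖ + ‖a - b‖)))
          * (‖w j (x - a)‖ * ‖w k (x - b)‖)) := by
      gcongr
    refine hstep2.trans ?_
    exact master_est m hε (by positivity) (norm_nonneg (x - a)) (norm_nonneg (x - b))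
      (norm_nonneg (a - b)) (norm_nonneg _) (norm_nonneg _) (by positivity) (hD (m+1))
      htri h1 h2
  -- integrate the master estimate
  have hnn : (0:ℝ) ≤ (1 + ‖a - b‖)^m := by positivity
  refine le_trans (mul_le_mul_of_nonneg_left (norm_integral_le_integral_norm _) hnn) ?_
  rw [← integral_const_mul]
  have hdom2 : Integrable (fun x : EuclideanSpace ℝ (Fin d) =>
      3 * (d:ℝ)^2 * (D (m+d+3) * D (m+1)) * ((1 + ‖x - a‖)^(d+1))⁻¹ * ε) volume :=
    (hKa.const_mul _).mul_const ε
  refine le_trans (integral_mono_of_nonneg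
    (Filter.Eventually.of_forall fun x => by positivity) hdom2
    (Filter.Eventually.of_forall hmaster)) ?_
  have e : (fun x : EuclideanSpace ℝ (Fin d) =>
      3 * (d:ℝ)^2 * (D (m+d+3) * D (m+1)) * ((1 + ‖x - a‖)^(d+1))⁻¹ * ε)
      = fun x : EuclideanSpace ℝ (Fin d) =>
        (3 * (d:ℝ)^2 * (D (m+d+3) * D (m+1)) * ε) * ((1 + ‖x - a‖)^(d+1))⁻¹ :=
    funext fun x => by ring
  rw [e, integral_const_mul, hKaeq]
  exact le_of_eq (by ring)
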